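/- The monomials α^r δ^s β^t, for all r, s, t ∈ ℕ, form an F-vector-space basis of the subalgebra 𝔠 of the Racah algebra ℜ generated by α, β, γ, δ. -/

import Mathlib

noncomputable section

/-- Generators of the Racah algebra. -/
inductive RGen : Type
  | A | B | C | D

namespace Racah

variable (F : Type) [Field F]

/-- The free algebra on the generators `A`, `B`, `C`, `D`. -/
abbrev FA := FreeAlgebra F RGen

def fA : FA F := FreeAlgebra.ι F RGen.A
def fB : FA F := FreeAlgebra.ι F RGen.B
def fC : FA F := FreeAlgebra.ι F RGen.C
def fD : FA F := FreeAlgebra.ι F RGen.D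

/-- α = [A,D] + AC − BA in the free algebra. -/
def fAl : FA F := (fA F * fD F - fD F * fA F) + fA F * fC F - fB F * fA F
/-- β = [B,D] + BA − CB in the free algebra. -/
def fBe : FA F := (fB F * fD F - fD F * fB F) + fB F * fA F - fC F * fB F
/-- γ = [C,D] + CB − AC in the free algebra. -/
def fGa : FA F := (fC F * fD F - fD F * fC F) + fC F * fB F - fA F * fC F

/-- The defining relations of the Racah algebra:
`[A,B] = [B,C] = [C,A] = 2D` and each of `α`, `β`, `γ` commutes with each of `A`, `B`, `C`, `D`. -/
inductive Rel : FA F → FA F → Prop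
  | AB : Rel (fA F * fB F - fB F * fA F) (2 * fD F)
  | BC : Rel (fB F * fC F - fC F * fB F) (2 * fD F)
  | CA : Rel (fC F * fA F - fA F * fC F) (2 * fD F)
  | cen (c x : FA F) (hc : c = fAl F ∨ c = fBe F ∨ c = fGa F)
      (hx : x = fA F ∨ x = fB F ∨ x = fC F ∨ x = fD F) :
      Rel (c * x) (x * c)

/-- The Racah algebra ℜ. -/
abbrev R := RingQuot (Rel F)

def A : R F := RingQuot.mkAlgHom F (Rel F) (fA F)
def B : R F := RingQuot.mkAlgHom F (Rel F) (fB F)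
def C : R F := RingQuot.mkAlgHom F (Rel F) (fC F)
def D : R F := RingQuot.mkAlgHom F (Rel F) (fD F)

/-- α = [A,D] + AC − BA. -/
def al : R F := (A F * D F - D F * A F) + A F * C F - B F * A F
/-- β = [B,D] + BA − CB. -/
def be : R F := (B F * D F - D F * B F) + B F * A F - C F * B F
/-- γ = [C,D] + CB − AC. -/
def ga : R F := (C F * D F - D F * C F) + C F * B F - A F * C F
/-- δ = A + B + C. -/
def de : R F := A F + B F + C F

end Racah

namespace Racah

variable (F : Type) [Field F]

/-- The subalgebra 𝔠 of ℜ generated by α, β, γ, δ. -/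
def cC : Subalgebra F (R F) := Algebra.adjoin F {al F, be F, ga F, de F}

/-- The distinguished representative
`D² + A² + B² + ((δ+2){A,B} − {A²,B} − {A,B²})/2 + A(β−δ) + B(δ−α)` of the Casimir class. -/
def casBase : R F := D F ^ 2 + A F ^ 2 + B F ^ 2
  + (2 : F)⁻¹ • ((de F + 2) * (A F * B F + B F * A F)
      - (A F ^ 2 * B F + B F * A F ^ 2) - (A F * B F ^ 2 + B F ^ 2 * A F))
  + A F * (be F - de F) + B F * (de F - al F)

/-- A Casimir element of ℜ is an element of the coset `casBase + 𝔠`. -/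
def IsCasimir (x : R F) : Prop := x - casBase F ∈ cC F

end Racah



open Polynomial

noncomputable section

namespace RacahAux

variable (F : Type) [Field F]

abbrev S1 := Polynomial F
abbrev S2 := Polynomial (S1 F)
abbrev S3 := Polynomial (S2 F)

def xx : S3 F := C (C X)
def yy : S3 F := C X
def zz : S3 F := X

def ff : S3 F := xx F * (zz F - yy F)
def gg : S3 F := yy F * (xx F - zz F)
def hh : S3 F := xx F + yy F + zz F

lemma ff_eq : ff F = C (C X) * X + C (-(C X * X) : S2 F) := by
  simp only [ff, xx, yy, zz, map_neg, map_mul]; ring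

lemma gg_eq : gg F = C (-X : S2 F) * X + C (X * C X : S2 F) := by
  simp only [gg, xx, yy, zz, map_neg, map_mul]; ring

lemma hh_eq : hh F = C (1 : S2 F) * X + C (C X + X : S2 F) := by
  simp only [hh, xx, yy, zz, map_add, map_one]; ring

lemma CX_ne : (C X : S2 F) ≠ 0 := by
  simp [Polynomial.X_ne_zero]

lemma ff_natDegree : (ff F).natDegree = 1 := by
  rw [ff_eq]; exact natDegree_linear (CX_ne F)

lemma ff_leadingCoeff : (ff F).leadingCoeff = C X := by
  rw [ff_eq]; exact leadingCoeff_linear (CX_ne F)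

lemma gg_natDegree : (gg F).natDegree = 1 := by
  rw [gg_eq]; exact natDegree_linear (neg_ne_zero.mpr X_ne_zero)

lemma gg_leadingCoeff : (gg F).leadingCoeff = -X := by
  rw [gg_eq]; exact leadingCoeff_linear (neg_ne_zero.mpr X_ne_zero)

lemma hh_natDegree : (hh F).natDegree = 1 := by
  rw [hh_eq]; exact natDegree_linear one_ne_zero

lemma hh_leadingCoeff : (hh F).leadingCoeff = 1 := by
  rw [hh_eq]; exact leadingCoeff_linear one_ne_zero

def vmon (i : ℕ × ℕ × ℕ) : S3 F := ff F ^ i.1 * hh F ^ i.2.1 * gg F ^ i.2.2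

def total (i : ℕ × ℕ × ℕ) : ℕ := i.1 + i.2.1 + i.2.2

lemma ff_ne : ff F ≠ 0 := fun h => CX_ne F (by rw [← ff_leadingCoeff F, h, leadingCoeff_zero])
lemma gg_ne : gg F ≠ 0 := fun h => (neg_ne_zero.mpr (X_ne_zero : (X : S2 F) ≠ 0))
  (by rw [← gg_leadingCoeff F, h, leadingCoeff_zero])
lemma hh_ne : hh F ≠ 0 := fun h => one_ne_zero
  (by rw [← hh_leadingCoeff F, h, leadingCoeff_zero] : (1 : S2 F) = 0)

lemma vmon_natDegree (i : ℕ × ℕ × ℕ) : (vmon F i).natDegree = total i := by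
  rw [vmon, natDegree_mul (mul_ne_zero (pow_ne_zero _ (ff_ne F)) (pow_ne_zero _ (hh_ne F))) (pow_ne_zero _ (gg_ne F)),
    natDegree_mul (pow_ne_zero _ (ff_ne F)) (pow_ne_zero _ (hh_ne F)),
    natDegree_pow, natDegree_pow, natDegree_pow, ff_natDegree, gg_natDegree, hh_natDegree,
    total]
  ring

lemma vmon_leadingCoeff (i : ℕ × ℕ × ℕ) :
    (vmon F i).leadingCoeff = (C X) ^ i.1 * (-X) ^ i.2.2 := by
  rw [vmon, leadingCoeff_mul, leadingCoeff_mul, leadingCoeff_pow, leadingCoeff_pow,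
    leadingCoeff_pow, ff_leadingCoeff, gg_leadingCoeff, hh_leadingCoeff, one_pow, mul_one]

lemma vmon_coeff_of_lt {i : ℕ × ℕ × ℕ} {N : ℕ} (h : total i < N) : (vmon F i).coeff N = 0 :=
  coeff_eq_zero_of_natDegree_lt (by rw [vmon_natDegree]; exact h)

lemma vmon_coeff_of_eq {i : ℕ × ℕ × ℕ} {N : ℕ} (h : total i = N) :
    (vmon F i).coeff N = (C X) ^ i.1 * (-X) ^ i.2.2 := by
  rw [← h, ← vmon_natDegree F i, coeff_natDegree, vmon_leadingCoeff]

end RacahAux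

namespace RacahAux
variable (F : Type) [Field F]

def Lfun (N t₀ r₀ : ℕ) : S3 F →ₗ[F] F :=
  (lcoeff F r₀).comp ((((lcoeff (S1 F) t₀).restrictScalars F).comp
    ((lcoeff (S2 F) N).restrictScalars F)))

lemma Lfun_vmon (N : ℕ) (i₀ i : ℕ × ℕ × ℕ) (h₀ : total i₀ = N) (hle : total i ≤ N) :
    Lfun F N i₀.2.2 i₀.1 (vmon F i) =
      if i = i₀ then (-1 : F) ^ i₀.2.2 else 0 := by
  simp only [Lfun, LinearMap.comp_apply, LinearMap.restrictScalars_apply, lcoeff_apply]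
  rcases lt_or_eq_of_le hle with hlt | heq
  · rw [vmon_coeff_of_lt F hlt]
    simp only [coeff_zero]
    rw [if_neg (by rintro rfl; exact absurd h₀ (Nat.ne_of_lt hlt))]
  · rw [vmon_coeff_of_eq F heq]
    obtain ⟨r, s, t⟩ := i
    obtain ⟨r₀, s₀, t₀⟩ := i₀
    simp only [total] at h₀ heq
    have e1 : ((C X) ^ r * (-X) ^ t : S2 F) = C ((-1 : S1 F) ^ t * X ^ r) * X ^ t := by
      have e0 : (C ((-1 : S1 F) ^ t * X ^ r) : S2 F) = (-1) ^ t * (C X) ^ r := by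
        rw [map_mul, map_pow, map_pow, map_neg, map_one]
      rw [e0, neg_pow (X : S2 F)]
      ring
    rw [e1, coeff_C_mul, coeff_X_pow]
    by_cases ht : t₀ = t
    · subst ht
      rw [if_pos rfl, mul_one]
      have e2 : ((-1 : S1 F) ^ t₀ * X ^ r : S1 F) = C ((-1 : F) ^ t₀) * X ^ r := by
        rw [map_pow, map_neg, map_one]
      rw [e2, coeff_C_mul, coeff_X_pow]
      by_cases hr : r₀ = r
      · subst hr
        rw [if_pos rfl, mul_one]
        have hs : s = s₀ := by omega
        subst hs
        rw [if_pos rfl]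
      · rw [if_neg hr, mul_zero, if_neg (by simp [Prod.ext_iff]; intro h; omega)]
    · rw [if_neg ht, mul_zero, coeff_zero,
        if_neg (by simp [Prod.ext_iff]; intro h1 h2; omega)]

lemma layer_kill (N : ℕ) (l : (ℕ × ℕ × ℕ) →₀ F) (hb : ∀ i ∈ l.support, total i ≤ N)
    (hl : Finsupp.linearCombination F (vmon F) l = 0) (i₀ : ℕ × ℕ × ℕ) (h₀ : total i₀ = N) :
    l i₀ = 0 := by
  by_cases hmem : i₀ ∈ l.support
  swap
  · exact Finsupp.notMem_support_iff.mp hmem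
  have h1 := congrArg (Lfun F N i₀.2.2 i₀.1) hl
  rw [map_zero, Finsupp.apply_linearCombination, Finsupp.linearCombination_apply,
    Finsupp.sum] at h1
  have h2 : ∑ i ∈ l.support, l i • (Lfun F N i₀.2.2 i₀.1 ∘ vmon F) i
      = l i₀ • ((-1 : F) ^ i₀.2.2) := by
    rw [Finset.sum_eq_single i₀]
    · rw [Function.comp_apply, Lfun_vmon F N i₀ i₀ h₀ (le_of_eq h₀), if_pos rfl]
    · intro i hi hne
      rw [Function.comp_apply, Lfun_vmon F N i₀ i h₀ (hb i hi), if_neg hne, smul_zero]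
    · intro h; exact absurd hmem h
  rw [h2] at h1
  have h3 : ((-1 : F) ^ i₀.2.2) ≠ 0 := pow_ne_zero _ (neg_ne_zero.mpr one_ne_zero)
  exact (smul_eq_zero.mp h1).resolve_right h3

theorem vmon_li : LinearIndependent F (vmon F) := by
  refine (linearIndependent_iff (R := F) (v := vmon F)).mpr fun l hl => ?_
  suffices h : ∀ N (l : (ℕ × ℕ × ℕ) →₀ F), (∀ i ∈ l.support, total i ≤ N) →
      Finsupp.linearCombination F (vmon F) l = 0 → l = 0 by
    exact h (l.support.sup total) l (fun i hi => Finset.le_sup hi) hl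
  intro N
  induction N with
  | zero =>
    intro l hb hl
    ext i
    by_cases h0 : total i = 0
    · exact layer_kill F 0 l hb hl i h0
    · by_contra hne
      exact h0 (Nat.le_zero.mp (hb i (Finsupp.mem_support_iff.mpr hne)))
  | succ n ih =>
    intro l hb hl
    refine ih l (fun i hi => ?_) hl
    rcases lt_or_eq_of_le (hb i hi) with h | h
    · omega
    · exact absurd (layer_kill F (n + 1) l hb hl i h) (Finsupp.mem_support_iff.mp hi)

end RacahAux

namespace Racah
open RacahAux

variable (F : Type) [Field F]

lemma rAB : A F * B F - B F * A F = 2 * D F := by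
  have h := RingQuot.mkAlgHom_rel F (Rel.AB (F := F))
  simpa [A, B, D, map_mul, map_sub, map_ofNat] using h

lemma rBC : B F * C F - C F * B F = 2 * D F := by
  have h := RingQuot.mkAlgHom_rel F (Rel.BC (F := F))
  simpa [B, C, D, map_mul, map_sub, map_ofNat] using h

lemma rCA : C F * A F - A F * C F = 2 * D F := by
  have h := RingQuot.mkAlgHom_rel F (Rel.CA (F := F))
  simpa [C, A, D, map_mul, map_sub, map_ofNat] using h

lemma map_fAl : RingQuot.mkAlgHom F (Rel F) (fAl F) = al F := by
  simp [fAl, al, A, B, C, D, map_mul, map_sub, map_add]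

lemma map_fBe : RingQuot.mkAlgHom F (Rel F) (fBe F) = be F := by
  simp [fBe, be, A, B, C, D, map_mul, map_sub, map_add]

lemma map_fGa : RingQuot.mkAlgHom F (Rel F) (fGa F) = ga F := by
  simp [fGa, ga, A, B, C, D, map_mul, map_sub, map_add]

lemma cen_comm {c x : R F}
    (hc : ∃ c', RingQuot.mkAlgHom F (Rel F) c' = c ∧ (c' = fAl F ∨ c' = fBe F ∨ c' = fGa F))
    (hx : ∃ x', RingQuot.mkAlgHom F (Rel F) x' = x ∧
      (x' = fA F ∨ x' = fB F ∨ x' = fC F ∨ x' = fD F)) :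
    Commute c x := by
  obtain ⟨c', hc1, hc2⟩ := hc
  obtain ⟨x', hx1, hx2⟩ := hx
  have h := RingQuot.mkAlgHom_rel F (Rel.cen c' x' hc2 hx2)
  rw [map_mul, map_mul, hc1, hx1] at h
  exact h

lemma al_comm_A : Commute (al F) (A F) :=
  cen_comm F ⟨_, map_fAl F, Or.inl rfl⟩ ⟨_, rfl, Or.inl rfl⟩
lemma al_comm_B : Commute (al F) (B F) :=
  cen_comm F ⟨_, map_fAl F, Or.inl rfl⟩ ⟨_, rfl, Or.inr (Or.inl rfl)⟩
lemma al_comm_C : Commute (al F) (C F) :=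
  cen_comm F ⟨_, map_fAl F, Or.inl rfl⟩ ⟨_, rfl, Or.inr (Or.inr (Or.inl rfl))⟩
lemma al_comm_D : Commute (al F) (D F) :=
  cen_comm F ⟨_, map_fAl F, Or.inl rfl⟩ ⟨_, rfl, Or.inr (Or.inr (Or.inr rfl))⟩

lemma al_comm_be : Commute (al F) (be F) := by
  unfold be
  exact ((((al_comm_B F).mul_right (al_comm_D F)).sub_right
    ((al_comm_D F).mul_right (al_comm_B F))).add_right
    ((al_comm_B F).mul_right (al_comm_A F))).sub_right
    ((al_comm_C F).mul_right (al_comm_B F))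

lemma al_comm_de : Commute (al F) (de F) := by
  unfold de
  exact ((al_comm_A F).add_right (al_comm_B F)).add_right (al_comm_C F)

lemma de_comm_A : Commute (de F) (A F) := by
  have hBA : B F * A F = A F * B F - 2 * D F := by rw [← rAB]; noncomm_ring
  have hCA : C F * A F = A F * C F + 2 * D F := by rw [← rCA]; noncomm_ring
  show de F * A F = A F * de F
  unfold de
  rw [add_mul, add_mul, hBA, hCA]
  noncomm_ring

lemma de_comm_B : Commute (de F) (B F) := by
  have hAB : A F * B F = B F * A F + 2 * D F := by rw [← rAB]; noncomm_ring
  have hCB : C F * B F = B F * C F - 2 * D F := by rw [← rBC]; noncomm_ring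
  show de F * B F = B F * de F
  unfold de
  rw [add_mul, add_mul, mul_add, mul_add, hAB, hCB]
  noncomm_ring

lemma de_comm_C : Commute (de F) (C F) := by
  have hAC : A F * C F = C F * A F - 2 * D F := by rw [← rCA]; noncomm_ring
  have hBC : B F * C F = C F * B F + 2 * D F := by rw [← rBC]; noncomm_ring
  show de F * C F = C F * de F
  unfold de
  rw [add_mul, add_mul, mul_add, mul_add, hAC, hBC]
  noncomm_ring

lemma de_comm_D (h2 : (2 : F) ≠ 0) : Commute (de F) (D F) := by
  have h1 : Commute (de F) (2 * D F) := by
    rw [← rAB]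
    exact ((de_comm_A F).mul_right (de_comm_B F)).sub_right
      ((de_comm_B F).mul_right (de_comm_A F))
  have key : (2 : R F) * (de F * D F) = (2 : R F) * (D F * de F) := by
    calc (2 : R F) * (de F * D F) = de F * (2 * D F) := by noncomm_ring
      _ = (2 * D F) * de F := h1.eq
      _ = (2 : R F) * (D F * de F) := by noncomm_ring
  have h2' : ((2 : F) • (de F * D F) : R F) = (2 : F) • (D F * de F) := by
    have e : ∀ x : R F, (2 : R F) * x = (2 : F) • x := by
      intro x
      rw [Algebra.smul_def, map_ofNat]
    rw [← e, ← e]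
    exact key
  exact smul_right_injective (R F) h2 h2'

lemma de_comm_be (h2 : (2 : F) ≠ 0) : Commute (de F) (be F) := by
  unfold be
  exact ((((de_comm_B F).mul_right (de_comm_D F h2)).sub_right
    ((de_comm_D F h2).mul_right (de_comm_B F))).add_right
    ((de_comm_B F).mul_right (de_comm_A F))).sub_right
    ((de_comm_C F).mul_right (de_comm_B F))

lemma sum_zero (h2 : (2 : F) ≠ 0) : al F + be F + ga F = 0 := by
  have h : al F + be F + ga F = de F * D F - D F * de F := by
    unfold al be ga de
    noncomm_ring
  rw [h, (de_comm_D F h2).eq, sub_self]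

def Phi0 : FA F →ₐ[F] S3 F :=
  FreeAlgebra.lift F (fun g => match g with
    | RGen.A => xx F
    | RGen.B => yy F
    | RGen.C => zz F
    | RGen.D => (0 : S3 F))

lemma phiRel {x y : FA F} (h : Rel F x y) : Phi0 F x = Phi0 F y := by
  induction h with
  | AB => simp [Phi0, fA, fB, fD]; ring
  | BC => simp [Phi0, fB, fC, fD]; ring
  | CA => simp [Phi0, fC, fA, fD]; ring
  | cen c x hc hx =>
    rw [map_mul, map_mul]
    exact mul_comm (Phi0 F c) (Phi0 F x)

/-- The commutative specialization A ↦ x, B ↦ y, C ↦ z, D ↦ 0. -/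
def Phi : R F →ₐ[F] S3 F :=
  RingQuot.liftAlgHom F ⟨Phi0 F, fun _ _ h => phiRel F h⟩

lemma Phi_A : Phi F (A F) = xx F := by
  rw [A, Phi, RingQuot.liftAlgHom_mkAlgHom_apply, fA, Phi0, FreeAlgebra.lift_ι_apply]

lemma Phi_B : Phi F (B F) = yy F := by
  rw [B, Phi, RingQuot.liftAlgHom_mkAlgHom_apply, fB, Phi0, FreeAlgebra.lift_ι_apply]

lemma Phi_C : Phi F (C F) = zz F := by
  rw [C, Phi, RingQuot.liftAlgHom_mkAlgHom_apply, fC, Phi0, FreeAlgebra.lift_ι_apply]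

lemma Phi_D : Phi F (D F) = 0 := by
  rw [D, Phi, RingQuot.liftAlgHom_mkAlgHom_apply, fD, Phi0, FreeAlgebra.lift_ι_apply]

lemma Phi_al : Phi F (al F) = ff F := by
  rw [al]
  simp only [map_sub, map_add, map_mul, Phi_A, Phi_B, Phi_C, Phi_D]
  rw [ff]
  ring

lemma Phi_be : Phi F (be F) = gg F := by
  rw [be]
  simp only [map_sub, map_add, map_mul, Phi_A, Phi_B, Phi_C, Phi_D]
  rw [gg]
  ring

lemma Phi_de : Phi F (de F) = hh F := by
  rw [de]
  simp only [map_add, Phi_A, Phi_B, Phi_C]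
  rw [hh]

/-- The monomials α^r δ^s β^t. -/
def M (i : ℕ × ℕ × ℕ) : R F := al F ^ i.1 * de F ^ i.2.1 * be F ^ i.2.2

lemma Phi_M (i : ℕ × ℕ × ℕ) : Phi F (M F i) = vmon F i := by
  rw [M, vmon, map_mul, map_mul, map_pow, map_pow, map_pow, Phi_al, Phi_be, Phi_de]

def PhiL : R F →ₗ[F] S3 F := (Phi F).toLinearMap

lemma M_li : LinearIndependent F (M F) :=
  LinearIndependent.of_comp (PhiL F) (by
    rw [show (⇑(PhiL F) ∘ M F) = vmon F from funext fun i => Phi_M F i]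
    exact vmon_li F)

end Racah

namespace RacahAux

lemma mul_mon {A : Type*} [Monoid A] {a b c : A} (hab : Commute a b) (hac : Commute a c)
    (hbc : Commute b c) (r s t r' s' t' : ℕ) :
    a ^ r * b ^ s * c ^ t * (a ^ r' * b ^ s' * c ^ t')
      = a ^ (r + r') * b ^ (s + s') * c ^ (t + t') := by
  have h1 : c ^ t * a ^ r' = a ^ r' * c ^ t := (hac.symm.pow_pow t r').eq
  have h2 : b ^ s * a ^ r' = a ^ r' * b ^ s := (hab.symm.pow_pow s r').eq
  have h3 : c ^ t * b ^ s' = b ^ s' * c ^ t := (hbc.symm.pow_pow t s').eq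
  rw [pow_add, pow_add, pow_add]
  calc a ^ r * b ^ s * c ^ t * (a ^ r' * b ^ s' * c ^ t')
      = a ^ r * b ^ s * (c ^ t * a ^ r') * (b ^ s' * c ^ t') := by simp only [mul_assoc]
    _ = a ^ r * b ^ s * (a ^ r' * c ^ t) * (b ^ s' * c ^ t') := by rw [h1]
    _ = a ^ r * (b ^ s * a ^ r') * ((c ^ t * b ^ s') * c ^ t') := by simp only [mul_assoc]
    _ = a ^ r * (a ^ r' * b ^ s) * ((b ^ s' * c ^ t) * c ^ t') := by rw [h2, h3]
    _ = a ^ r * a ^ r' * (b ^ s * b ^ s') * (c ^ t * c ^ t') := by simp only [mul_assoc]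

end RacahAux

namespace Racah
open RacahAux

variable (F : Type) [Field F]

lemma M_mul (h2 : (2 : F) ≠ 0) (i j : ℕ × ℕ × ℕ) : M F i * M F j = M F (i + j) := by
  obtain ⟨r, s, t⟩ := i
  obtain ⟨r', s', t'⟩ := j
  exact mul_mon (al_comm_de F) (al_comm_be F) (de_comm_be F h2) r s t r' s' t'

lemma M_one : M F (0, 0, 0) = 1 := by
  simp [M]

lemma M_al : M F (1, 0, 0) = al F := by
  simp [M]

lemma M_de : M F (0, 1, 0) = de F := by
  simp [M]

lemma M_be : M F (0, 0, 1) = be F := by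
  simp [M]

lemma M_mem (i : ℕ × ℕ × ℕ) : M F i ∈ cC F := by
  have hal : al F ∈ cC F := Algebra.subset_adjoin (by simp)
  have hbe : be F ∈ cC F := Algebra.subset_adjoin (by simp)
  have hde : de F ∈ cC F := Algebra.subset_adjoin (by simp)
  exact mul_mem (mul_mem (pow_mem hal _) (pow_mem hde _)) (pow_mem hbe _)

lemma span_eq (h2 : (2 : F) ≠ 0) :
    Submodule.span F (Set.range (M F)) = Subalgebra.toSubmodule (cC F) := by
  apply le_antisymm
  · rw [Submodule.span_le]
    rintro x ⟨i, rfl⟩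
    exact M_mem F i
  · intro x hx
    have hx' : x ∈ Algebra.adjoin F {al F, be F, ga F, de F} := hx
    clear hx
    have hmulclosed : ∀ y ∈ Submodule.span F (Set.range (M F)),
        ∀ z ∈ Submodule.span F (Set.range (M F)),
        y * z ∈ Submodule.span F (Set.range (M F)) := by
      intro y hy z hz
      have hle : Submodule.span F (Set.range (M F)) * Submodule.span F (Set.range (M F))
          ≤ Submodule.span F (Set.range (M F)) := by
        rw [Submodule.span_mul_span]
        apply Submodule.span_le.mpr
        rintro w hw
        rw [Set.mem_mul] at hw
        obtain ⟨u, ⟨i, rfl⟩, v, ⟨j, rfl⟩, rfl⟩ := hw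
        exact Submodule.subset_span ⟨i + j, (M_mul F h2 i j).symm⟩
      exact hle (Submodule.mul_mem_mul hy hz)
    induction hx' using Algebra.adjoin_induction with
    | mem u hu =>
      rcases hu with h | h | h | h
      · exact h ▸ Submodule.subset_span ⟨(1, 0, 0), M_al F⟩
      · exact h ▸ Submodule.subset_span ⟨(0, 0, 1), M_be F⟩
      · have h0 : ga F = -(al F + be F) := by
          rw [← zero_sub (al F + be F), ← sum_zero F h2]
          abel
        rw [h, h0]
        exact Submodule.neg_mem _ (Submodule.add_mem _
          (Submodule.subset_span ⟨(1, 0, 0), M_al F⟩)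
          (Submodule.subset_span ⟨(0, 0, 1), M_be F⟩))
      · simp only [Set.mem_singleton_iff] at h
        exact h ▸ Submodule.subset_span ⟨(0, 1, 0), M_de F⟩
    | algebraMap r =>
      rw [Algebra.algebraMap_eq_smul_one, ← M_one F]
      exact Submodule.smul_mem _ _ (Submodule.subset_span ⟨(0, 0, 0), rfl⟩)
    | add u v hu hv hu' hv' => exact Submodule.add_mem _ hu' hv'
    | mul u v hu hv hu' hv' => exact hmulclosed u hu' v hv'

end Racah

open Racah in
/-- the monomials `α^r δ^s β^t` (r,s,t ∈ ℕ) form an F-vector-space basis of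
the subalgebra 𝔠 of ℜ generated by α, β, γ, δ. -/
theorem stmt12 (F : Type) [Field F] (h2 : (2 : F) ≠ 0) :
    ∃ b : Module.Basis (ℕ × ℕ × ℕ) F (cC F),
      ∀ r s t : ℕ, (b (r, s, t) : Racah.R F) = al F ^ r * de F ^ s * be F ^ t := by
  refine ⟨(Module.Basis.span (M_li F)).map (LinearEquiv.ofEq _ _ (span_eq F h2)), fun r s t => ?_⟩
  have e1 : (((Module.Basis.span (M_li F)).map (LinearEquiv.ofEq _ _ (span_eq F h2))) (r, s, t) : R F)
      = ((Module.Basis.span (M_li F)) (r, s, t) : R F) := by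
    rw [Module.Basis.map_apply]
    rfl
  exact e1.trans (congrArg Subtype.val (Module.Basis.span_apply (M_li F) (r, s, t)))
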